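/- Let L > 0 and let u : [0, L] → ℝ be three times continuously differentiable with u'(0) = u'(L) = 0. Then ∫₀^L u(x) · g''(x) dx = 0, where g(x) = (u'(x))² and g'' denotes its second derivative. -/

import Mathlib

/-- Orthogonality relation `⟨u, ∂ₓ²(∂ₓu)²⟩ = 0`: for `u` three times continuously
differentiable with `u'(0) = u'(L) = 0`, `∫₀^L u (g'') = 0`, where `g = (u')²`. -/
theorem stmt8 (L : ℝ) (hL : 0 < L) (u : ℝ → ℝ) (hu : ContDiff ℝ 3 u)
    (h0 : deriv u 0 = 0) (hLb : deriv u L = 0) :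
    ∫ x in (0:ℝ)..L, u x * deriv (deriv (fun y => (deriv u y)^2)) x = 0 := by
  set u1 := deriv u with hu1def
  set u2 := deriv u1 with hu2def
  set u3 := deriv u2 with hu3def
  have hu1 : ContDiff ℝ 2 u1 :=
    (contDiff_succ_iff_deriv.mp (show ContDiff ℝ (2+1) u from hu)).2.2
  have hu2 : ContDiff ℝ 1 u2 :=
    (contDiff_succ_iff_deriv.mp (show ContDiff ℝ (1+1) u1 from hu1)).2.2
  have hu3c : Continuous u3 :=
    ((contDiff_succ_iff_deriv.mp (show ContDiff ℝ (0+1) u2 from hu2)).2.2).continuous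
  have du : ∀ x, HasDerivAt u (u1 x) x :=
    fun x => (hu.differentiable (by norm_num) x).hasDerivAt
  have du1 : ∀ x, HasDerivAt u1 (u2 x) x :=
    fun x => (hu1.differentiable (by norm_num) x).hasDerivAt
  have du2 : ∀ x, HasDerivAt u2 (u3 x) x :=
    fun x => (hu2.differentiable (by norm_num) x).hasDerivAt
  -- first derivative of g
  have hG : ∀ x, HasDerivAt (fun y => (deriv u y)^2) (2 * u1 x * u2 x) x := by
    intro x
    have : HasDerivAt (fun y => u1 y ^ 2) _ x := (du1 x).pow 2
    simpa [mul_comm, mul_assoc, mul_left_comm] using this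
  have hGder : deriv (fun y => (deriv u y)^2) = fun x => 2 * u1 x * u2 x :=
    funext fun x => (hG x).deriv
  -- second derivative of g
  have hG2 : ∀ x, HasDerivAt (fun x => 2 * u1 x * u2 x)
      (2 * u2 x * u2 x + 2 * u1 x * u3 x) x := by
    intro x
    have : HasDerivAt (fun y => 2 * u1 y * u2 y) _ x := ((du1 x).const_mul 2).mul (du2 x)
    simpa [mul_assoc] using this
  have hG2der : ∀ x, deriv (deriv (fun y => (deriv u y)^2)) x
      = 2 * u2 x * u2 x + 2 * u1 x * u3 x := by
    intro x
    rw [hGder]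
    exact (hG2 x).deriv
  -- antiderivative
  set F : ℝ → ℝ := fun x => u x * (2 * u1 x * u2 x) - (2/3) * (u1 x)^3 with hF
  have hFd : ∀ x, HasDerivAt F (u x * (2 * u2 x * u2 x + 2 * u1 x * u3 x)) x := by
    intro x
    have h1 : HasDerivAt (fun y => u y * (2 * u1 y * u2 y)) _ x := (du x).mul (hG2 x)
    have h2 : HasDerivAt (fun x => (2/3) * (u1 x)^3) ((2/3) * (3 * (u1 x)^2 * u2 x)) x := by
      have := (du1 x).pow 3
      exact this.const_mul (2/3)
    have h3 : HasDerivAt (fun y => u y * (2 * u1 y * u2 y) - (2/3) * (u1 y)^3) _ x := h1.sub h2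
    convert h3 using 1
    ring
  have hcont : Continuous fun x => u x * (2 * u2 x * u2 x + 2 * u1 x * u3 x) :=
    hu.continuous.mul
      (((continuous_const.mul hu2.continuous).mul hu2.continuous).add
        ((continuous_const.mul hu1.continuous).mul hu3c))
  have hint : IntervalIntegrable (fun x => u x * (2 * u2 x * u2 x + 2 * u1 x * u3 x))
      MeasureTheory.volume 0 L := hcont.intervalIntegrable _ _
  have key : (∫ x in (0:ℝ)..L, u x * (2 * u2 x * u2 x + 2 * u1 x * u3 x)) = F L - F 0 :=
    intervalIntegral.integral_eq_sub_of_hasDerivAt (fun x _ => hFd x) hint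
  have : (∫ x in (0:ℝ)..L, u x * deriv (deriv (fun y => (deriv u y)^2)) x)
      = ∫ x in (0:ℝ)..L, u x * (2 * u2 x * u2 x + 2 * u1 x * u3 x) := by
    apply intervalIntegral.integral_congr
    intro x _
    simp only [hG2der x]
  rw [this, key, hF]
  simp only []
  rw [show u1 0 = 0 from h0, show u1 L = 0 from hLb]
  ring
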